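/- Let n ≥ 2, let 0 < ε ≤ 1, and let A ∈ ℝ^{n×(n+1)} be the matrix with columns indexed 0,1,…,n whose entries are A(i,0) = 1 and A(i,i) = ε for every row i ∈ {1,…,n}, all other entries being 0. Then for every i ∈ {1,…,n}, ‖A − π_{{i}}(A)‖_2 ≥ (√n/2) · ε, where ε equals the second-largest singular value of A, i.e., ε = ‖A − A_1‖_2 with A_1 the best rank-1 approximation of A in spectral norm. -/

import Mathlib

open Matrix BigOperators

noncomputable def projSpan {m n : ℕ} (A : Matrix (Fin m) (Fin n) ℝ) (S : Finset (Fin m)) :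
    Matrix (Fin m) (Fin n) ℝ := fun i j =>
  (Submodule.orthogonalProjectionOnto
      (Submodule.span ℝ (Set.range (fun s : S => (WithLp.equiv 2 (Fin n → ℝ)).symm (A s))))
      ((WithLp.equiv 2 (Fin n → ℝ)).symm (A i)) : EuclideanSpace ℝ (Fin n)) j

def rowSub {m n : ℕ} (A : Matrix (Fin m) (Fin n) ℝ) (S : Finset (Fin m)) :
    Matrix {x // x ∈ S} (Fin n) ℝ := fun i j => A i.1 j

noncomputable def gramDet {m n : ℕ} (A : Matrix (Fin m) (Fin n) ℝ) (S : Finset (Fin m)) : ℝ :=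
  (rowSub A S * (rowSub A S)ᵀ).det

noncomputable def frobSq {m n : ℕ} (M : Matrix (Fin m) (Fin n) ℝ) : ℝ :=
  ∑ i, ∑ j, (M i j)^2

noncomputable def specNorm {m n : ℕ} (M : Matrix (Fin m) (Fin n) ℝ) : ℝ :=
  ‖LinearMap.toContinuousLinearMap (Matrix.toEuclideanLin M)‖

set_option maxHeartbeats 1000000 in
/-- For the n×(n+1) matrix A with A(i,0) = 1, A(i,i) = ε and zeros elsewhere and 0 < ε ≤ 1,
‖A − π_{{i}}(A)‖₂ ≥ (√n/2)·ε for every row i (and ε = ‖A − A₁‖₂ is the second-largest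
singular value of A). -/
theorem lower_bound_one_row (n : ℕ) (hn : 2 ≤ n) (ε : ℝ) (hε : 0 < ε) (hε1 : ε ≤ 1)
    (A : Matrix (Fin n) (Fin (n + 1)) ℝ)
    (hA : ∀ i j, A i j = if (j : ℕ) = 0 then 1 else if (j : ℕ) = (i : ℕ) + 1 then ε else 0)
    (i : Fin n) :
    specNorm (A - projSpan A {i}) ≥ (Real.sqrt n / 2) * ε := by
  classical
  have hε2 : (0:ℝ) < 1 + ε^2 := by nlinarith
  set v : EuclideanSpace ℝ (Fin (n+1)) := (WithLp.equiv 2 (Fin (n+1) → ℝ)).symm (A i) with hv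
  -- row dot products
  have hAiAj : ∀ j : Fin n, ∑ l, A i l * A j l = 1 + (if j = i then ε^2 else 0) := by
    intro j
    rw [Fin.sum_univ_succ]
    have h0 : A i 0 * A j 0 = 1 := by simp [hA]
    have hk : ∀ k : Fin n, A i (Fin.succ k) * A j (Fin.succ k)
        = if k = i then (if k = j then ε^2 else 0) else 0 := by
      intro k
      simp only [hA, Fin.val_succ, Nat.succ_ne_zero, if_false, add_left_inj, Fin.val_eq_val]
      by_cases h1 : k = i <;> by_cases h2 : k = j <;> simp [h1, h2, sq]
    rw [h0]
    simp only [hk, Finset.sum_ite_eq, Finset.mem_univ, if_true]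
    by_cases h : i = j <;> simp [h, eq_comm]
  have hvnorm : (‖v‖:ℝ)^2 = 1 + ε^2 := by
    rw [← real_inner_self_eq_norm_sq]
    have : (inner ℝ v v : ℝ) = ∑ l, A i l * A i l := by
      simp only [hv, PiLp.inner_apply]
      simp [RCLike.inner_apply, WithLp.equiv_symm_apply, PiLp.toLp_apply, mul_comm, sq]
    rw [this, hAiAj i, if_pos rfl]
  -- projection formula
  have hset : Submodule.span ℝ (Set.range (fun s : ({i} : Finset (Fin n)) =>
      (WithLp.equiv 2 (Fin (n+1) → ℝ)).symm (A s))) = ℝ ∙ v := by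
    congr 1
    ext y
    constructor
    · rintro ⟨⟨s, hs⟩, rfl⟩
      simp only [Finset.mem_singleton] at hs
      subst hs
      exact Set.mem_singleton _
    · rintro rfl
      exact ⟨⟨i, Finset.mem_singleton_self i⟩, rfl⟩
  have hP : ∀ (j : Fin n) (l : Fin (n+1)), projSpan A {i} j l
      = ((1 + (if j = i then ε^2 else 0)) / (1 + ε^2)) * A i l := by
    intro j l
    unfold projSpan
    have hK : ∀ (K L : Submodule ℝ (EuclideanSpace ℝ (Fin (n+1)))) (_ : K = L)
        [K.HasOrthogonalProjection] [L.HasOrthogonalProjection] (w : EuclideanSpace ℝ (Fin (n+1))),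
        (K.orthogonalProjectionOnto w : EuclideanSpace ℝ (Fin (n+1))) = L.starProjection w := by
      rintro K L rfl _ _ w; rfl
    rw [hK _ _ hset, Submodule.starProjection_singleton]
    have hinner : (inner ℝ v ((WithLp.equiv 2 (Fin (n+1) → ℝ)).symm (A j)) : ℝ)
        = 1 + (if j = i then ε^2 else 0) := by
      rw [← hAiAj j]
      simp only [hv, PiLp.inner_apply]
      simp [RCLike.inner_apply, WithLp.equiv_symm_apply, PiLp.toLp_apply, mul_comm]
    simp only [PiLp.smul_apply, smul_eq_mul, hinner, hvnorm]
    simp [hv, WithLp.equiv_symm_apply, PiLp.toLp_apply]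
  -- the test vector
  set xf : Fin (n+1) → ℝ := fun l => if (l:ℕ) = 0 then ((n:ℝ)-1)*ε
    else if (l:ℕ) = (i:ℕ)+1 then -((n:ℝ)-1) else 1+ε^2 with hxf
  set x : EuclideanSpace ℝ (Fin (n+1)) := (WithLp.equiv 2 (Fin (n+1) → ℝ)).symm xf with hx
  have hAx : ∀ j : Fin n, ∑ l, A j l * xf l
      = ((n:ℝ)-1)*ε + ε * (if j = i then -((n:ℝ)-1) else 1+ε^2) := by
    intro j
    rw [Fin.sum_univ_succ]
    have h0 : A j 0 * xf 0 = ((n:ℝ)-1)*ε := by simp [hA, hxf]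
    have hk : ∀ k : Fin n, A j (Fin.succ k) * xf (Fin.succ k)
        = if k = j then ε * (if k = i then -((n:ℝ)-1) else 1+ε^2) else 0 := by
      intro k
      simp only [hA, hxf, Fin.val_succ, Nat.succ_ne_zero, if_false, add_left_inj,
        Fin.val_eq_val]
      by_cases h1 : k = j <;> by_cases h2 : k = i <;> simp [h1, h2]
    rw [h0]
    simp only [hk, Finset.sum_ite_eq', Finset.mem_univ, if_true]
  set M : Matrix (Fin n) (Fin (n+1)) ℝ := A - projSpan A {i} with hM
  have hMx : ∀ j : Fin n, (M *ᵥ xf) j = if j = i then 0 else ε * ((n:ℝ) + ε^2) := by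
    intro j
    have : (M *ᵥ xf) j = ∑ l, A j l * xf l
        - ((1 + (if j = i then ε^2 else 0)) / (1 + ε^2)) * ∑ l, A i l * xf l := by
      simp only [hM, Matrix.mulVec, dotProduct, Matrix.sub_apply, hP, sub_mul,
        Finset.sum_sub_distrib, Finset.mul_sum]
      ring_nf
    rw [this, hAx j, hAx i]
    by_cases h : j = i
    · simp only [h, if_pos rfl, ↓reduceIte]
      field_simp
      ring
    · simp only [if_neg h, if_pos rfl, ↓reduceIte]
      field_simp
      ring
  -- norms
  have hnormx : ‖x‖^2 = ((n:ℝ)-1) * ((1+ε^2) * ((n:ℝ)+ε^2)) := by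
    rw [← real_inner_self_eq_norm_sq]
    have : (inner ℝ x x : ℝ) = ∑ l, xf l * xf l := by
      simp only [hx, PiLp.inner_apply]
      simp [RCLike.inner_apply, WithLp.equiv_symm_apply, PiLp.toLp_apply, mul_comm, sq]
    rw [this, Fin.sum_univ_succ]
    have h0 : xf 0 * xf 0 = (((n:ℝ)-1)*ε)^2 := by simp [hxf]; ring
    have hk : ∀ k : Fin n, xf (Fin.succ k) * xf (Fin.succ k)
        = (1+ε^2)^2 + (if k = i then ((n:ℝ)-1)^2 - (1+ε^2)^2 else 0) := by
      intro k
      simp only [hxf, Fin.val_succ, Nat.succ_ne_zero, if_false, add_left_inj, Fin.val_eq_val]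
      by_cases h2 : k = i <;> simp [h2] <;> ring
    rw [h0]
    simp only [hk, Finset.sum_add_distrib, Finset.sum_ite_eq', Finset.mem_univ, if_true,
      Finset.sum_const, Finset.card_univ, Fintype.card_fin, nsmul_eq_mul]
    ring
  have h2n : (2:ℝ) ≤ (n:ℝ) := by exact_mod_cast hn
  have hnormMx : ‖Matrix.toEuclideanLin M x‖^2
      = ((n:ℝ)-1) * (ε * ((n:ℝ) + ε^2))^2 := by
    rw [← real_inner_self_eq_norm_sq]
    have hap : Matrix.toEuclideanLin M x = (WithLp.equiv 2 (Fin n → ℝ)).symm (M *ᵥ xf) := by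
      rw [hx, WithLp.equiv_symm_apply, Matrix.toEuclideanLin_apply_piLp_toLp, WithLp.equiv_symm_apply]
    rw [hap]
    have : (inner ℝ ((WithLp.equiv 2 (Fin n → ℝ)).symm (M *ᵥ xf))
        ((WithLp.equiv 2 (Fin n → ℝ)).symm (M *ᵥ xf)) : ℝ)
        = ∑ j, (M *ᵥ xf) j * (M *ᵥ xf) j := by
      simp only [PiLp.inner_apply]
      simp [RCLike.inner_apply, WithLp.equiv_symm_apply, PiLp.toLp_apply, mul_comm, sq]
    rw [this]
    have hk : ∀ j : Fin n, (M *ᵥ xf) j * (M *ᵥ xf) j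
        = (ε * ((n:ℝ)+ε^2))^2 - (if j = i then (ε * ((n:ℝ)+ε^2))^2 else 0) := by
      intro j
      rw [hMx j]
      by_cases h : j = i <;> simp [h] <;> ring
    simp only [hk, Finset.sum_sub_distrib, Finset.sum_ite_eq', Finset.mem_univ, if_true,
      Finset.sum_const, Finset.card_univ, Fintype.card_fin, nsmul_eq_mul]
    ring
  -- put it together
  have hpos1 : (0:ℝ) < (n:ℝ) - 1 := by linarith
  have hpos2 : (0:ℝ) < (n:ℝ) + ε^2 := by nlinarith [sq_nonneg ε]
  have hxpos : 0 < ‖x‖ := by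
    have h1 : (0:ℝ) < ‖x‖^2 := by
      rw [hnormx]
      exact mul_pos hpos1 (mul_pos hε2 hpos2)
    nlinarith [norm_nonneg x]
  have hkey : (Real.sqrt n / 2 * ε) * ‖x‖ ≤ ‖Matrix.toEuclideanLin M x‖ := by
    have hc : 0 ≤ Real.sqrt n / 2 * ε := by positivity
    have hsq : ((Real.sqrt n / 2 * ε) * ‖x‖)^2 ≤ ‖Matrix.toEuclideanLin M x‖^2 := by
      have hs : (Real.sqrt n)^2 = (n:ℝ) := Real.sq_sqrt (by positivity)
      rw [mul_pow, mul_pow, div_pow, hs, hnormx, hnormMx]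
      have he1 : ε^2 ≤ 1 := by nlinarith
      have hfac : (n:ℝ)/4*(1+ε^2) ≤ (n:ℝ)+ε^2 := by
        nlinarith [mul_nonneg (by linarith : (0:ℝ) ≤ (n:ℝ)) (by linarith : (0:ℝ) ≤ 1 - ε^2)]
      have hc : (0:ℝ) ≤ ε^2*(((n:ℝ)-1)*((n:ℝ)+ε^2)) :=
        mul_nonneg (sq_nonneg ε) (mul_nonneg hpos1.le hpos2.le)
      have hmul := mul_le_mul_of_nonneg_left hfac hc
      nlinarith [hmul]
    calc (Real.sqrt n / 2 * ε) * ‖x‖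
        = Real.sqrt (((Real.sqrt n / 2 * ε) * ‖x‖)^2) :=
          (Real.sqrt_sq (mul_nonneg hc (norm_nonneg x))).symm
      _ ≤ Real.sqrt (‖Matrix.toEuclideanLin M x‖^2) := Real.sqrt_le_sqrt hsq
      _ = ‖Matrix.toEuclideanLin M x‖ := Real.sqrt_sq (norm_nonneg _)
  have hop : ‖Matrix.toEuclideanLin M x‖
      ≤ specNorm M * ‖x‖ := by
    have := (LinearMap.toContinuousLinearMap (Matrix.toEuclideanLin M)).le_opNorm x
    simpa [specNorm] using this
  have : (Real.sqrt n / 2 * ε) * ‖x‖ ≤ specNorm M * ‖x‖ := le_trans hkey hop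
  exact le_of_mul_le_mul_right this hxpos
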